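/- For every n ∈ ℕ, every s with 1/(2n+3) ≤ s ≤ 1/2, and every θ with 0 ≤ θ ≤ 1/2, one has |cos((2n+3)πs)·sin(π(s−θ)) − sin(πs)·cos((2n+3)π(s−θ))| ≤ (6n+9)·π²·s·θ. -/
import Mathlib

lemma my_abs_cos_sub_cos (x y : ℝ) : |Real.cos x - Real.cos y| ≤ |x - y| := by
  rw [Real.cos_sub_cos, abs_mul, abs_mul]
  have h1 : |Real.sin ((x + y) / 2)| ≤ 1 := Real.abs_sin_le_one _
  have h2 : |Real.sin ((x - y) / 2)| ≤ |x - y| / 2 := by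
    have h := Real.abs_sin_le_abs (x := (x - y) / 2)
    rwa [show |(x - y) / 2| = |x - y| / 2 by rw [abs_div]; norm_num] at h
  have h3 : |(-2 : ℝ)| = 2 := by norm_num
  rw [h3]
  nlinarith [abs_nonneg (Real.sin ((x - y) / 2)), abs_nonneg (Real.sin ((x + y) / 2)),
    abs_nonneg (x - y)]

lemma my_abs_sin_sub_sin (x y : ℝ) : |Real.sin x - Real.sin y| ≤ |x - y| := by
  rw [Real.sin_sub_sin, abs_mul, abs_mul]
  have h1 : |Real.cos ((x + y) / 2)| ≤ 1 := Real.abs_cos_le_one _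
  have h2 : |Real.sin ((x - y) / 2)| ≤ |x - y| / 2 := by
    have h := Real.abs_sin_le_abs (x := (x - y) / 2)
    rwa [show |(x - y) / 2| = |x - y| / 2 by rw [abs_div]; norm_num] at h
  have h3 : |(2 : ℝ)| = 2 := by norm_num
  rw [h3]
  nlinarith [abs_nonneg (Real.sin ((x - y) / 2)), abs_nonneg (Real.cos ((x + y) / 2)),
    abs_nonneg (x - y)]

/-- Trigonometric inequality:
`|cos((2n+3)πs)·sin(π(s−θ)) − sin(πs)·cos((2n+3)π(s−θ))| ≤ (6n+9)π²sθ`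
for `1/(2n+3) ≤ s ≤ 1/2` and `0 ≤ θ ≤ 1/2`. -/
theorem trig_difference_bound (n : ℕ) (s θ : ℝ)
    (hs1 : 1 / (2 * (n : ℝ) + 3) ≤ s) (hs2 : s ≤ 1 / 2)
    (hθ1 : 0 ≤ θ) (hθ2 : θ ≤ 1 / 2) :
    |Real.cos ((2 * (n : ℝ) + 3) * Real.pi * s) * Real.sin (Real.pi * (s - θ)) -
        Real.sin (Real.pi * s) * Real.cos ((2 * (n : ℝ) + 3) * Real.pi * (s - θ))| ≤
      (6 * (n : ℝ) + 9) * Real.pi ^ 2 * s * θ := by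
  set m : ℝ := 2 * (n : ℝ) + 3 with hm
  have hm3 : (3:ℝ) ≤ m := by
    have : (0:ℝ) ≤ (n:ℝ) := Nat.cast_nonneg n
    linarith
  have hπ := Real.pi_pos
  have hπ1 : (1:ℝ) ≤ Real.pi := Real.one_le_pi_div_two.trans (by linarith)
  have hmpos : (0:ℝ) < m := by linarith
  have hspos : 0 < s := lt_of_lt_of_le (by positivity) hs1
  have hms : 1 ≤ m * s := by
    have := (div_le_iff₀ hmpos).mp hs1
    linarith [mul_comm s m]
  -- rewrite expression
  have key : Real.cos (m * Real.pi * s) * Real.sin (Real.pi * (s - θ)) -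
      Real.sin (Real.pi * s) * Real.cos (m * Real.pi * (s - θ)) =
      Real.sin (Real.pi * s) * (Real.cos (m * Real.pi * s) - Real.cos (m * Real.pi * (s - θ)))
      + Real.cos (m * Real.pi * s) * (Real.sin (Real.pi * (s - θ)) - Real.sin (Real.pi * s)) := by
    ring
  rw [key]
  have h1 : |Real.sin (Real.pi * s)| ≤ Real.pi * s := by
    have h := Real.abs_sin_le_abs (x := Real.pi * s)
    rwa [abs_of_nonneg (mul_nonneg hπ.le hspos.le)] at h
  have h2 : |Real.cos (m * Real.pi * s) - Real.cos (m * Real.pi * (s - θ))| ≤ m * Real.pi * θ := by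
    have := my_abs_cos_sub_cos (m * Real.pi * s) (m * Real.pi * (s - θ))
    have he : m * Real.pi * s - m * Real.pi * (s - θ) = m * Real.pi * θ := by ring
    rw [he] at this
    rwa [abs_of_nonneg (mul_nonneg (mul_nonneg hmpos.le hπ.le) hθ1)] at this
  have h3 : |Real.cos (m * Real.pi * s)| ≤ 1 := Real.abs_cos_le_one _
  have h4 : |Real.sin (Real.pi * (s - θ)) - Real.sin (Real.pi * s)| ≤ Real.pi * θ := by
    have := my_abs_sin_sub_sin (Real.pi * (s - θ)) (Real.pi * s)
    have he : Real.pi * (s - θ) - Real.pi * s = -(Real.pi * θ) := by ring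
    rw [he, abs_neg] at this
    rwa [abs_of_nonneg (mul_nonneg hπ.le hθ1)] at this
  calc |Real.sin (Real.pi * s) * (Real.cos (m * Real.pi * s) - Real.cos (m * Real.pi * (s - θ)))
      + Real.cos (m * Real.pi * s) * (Real.sin (Real.pi * (s - θ)) - Real.sin (Real.pi * s))|
      ≤ |Real.sin (Real.pi * s)| * |Real.cos (m * Real.pi * s) - Real.cos (m * Real.pi * (s - θ))|
      + |Real.cos (m * Real.pi * s)| * |Real.sin (Real.pi * (s - θ)) - Real.sin (Real.pi * s)| := by
        calc _ ≤ _ := abs_add_le _ _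
        _ = _ := by rw [abs_mul, abs_mul]
    _ ≤ (Real.pi * s) * (m * Real.pi * θ) + 1 * (Real.pi * θ) := by
        gcongr <;> positivity
    _ ≤ (6 * (n : ℝ) + 9) * Real.pi ^ 2 * s * θ := by
        have h6 : (6 * (n : ℝ) + 9) = 3 * m := by rw [hm]; ring
        rw [h6]
        have hmsπ : 1 ≤ m * s * Real.pi := by nlinarith
        have hb : Real.pi * θ ≤ m * s * Real.pi * (Real.pi * θ) :=
          le_mul_of_one_le_left (by positivity) hmsπ
        nlinarith [mul_nonneg (mul_nonneg hmpos.le (sq_nonneg Real.pi)) (mul_nonneg hspos.le hθ1)]
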